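/- The space l(r,s,t,p;Δ) with 1 < p_n ≤ M, equipped with the Luxemburg norm, is a BK space: it is a Banach space in which each coordinate functional x ↦ x_k is continuous. -/

import Mathlib

open Finset Filter Topology ENNReal

/-- The difference operator `Δ` with the convention `x₋₁ = 0`. -/
def del (x : ℕ → ℝ) (k : ℕ) : ℝ :=
  x k - if k = 0 then 0 else x (k - 1)

/-- The generalized-means-of-differences transform `(A(r,s,t)·Δ)x`. -/
noncomputable def Amap (r s t : ℕ → ℝ) (x : ℕ → ℝ) (n : ℕ) : ℝ :=
  (1 / r n) * ∑ k ∈ Finset.range (n + 1), s (n - k) * t k * del x k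

/-- The modular `σ_p` on `l(r,s,t,p;Δ)`, with values in `[0,∞]`. -/
noncomputable def sigmaP (r s t p : ℕ → ℝ) (x : ℕ → ℝ) : ℝ≥0∞ :=
  ∑' n, ENNReal.ofReal (|Amap r s t x n| ^ p n)

/-- The space `l(r,s,t,p;Δ)`. -/
def lrstp (r s t p : ℕ → ℝ) : Set (ℕ → ℝ) :=
  {x | sigmaP r s t p x < ⊤}

/-- The paranorm `h̃` on `l(r,s,t,p;Δ)`. -/
noncomputable def htilde (r s t p : ℕ → ℝ) (M : ℝ) (x : ℕ → ℝ) : ℝ :=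
  ((sigmaP r s t p x).toReal) ^ (1 / M)

/-- The Luxemburg norm on `l(r,s,t,p;Δ)`. -/
noncomputable def lux (r s t p : ℕ → ℝ) (x : ℕ → ℝ) : ℝ :=
  sInf {c : ℝ | 0 < c ∧ sigmaP r s t p (c⁻¹ • x) ≤ 1}

/- ## auxiliary -/

noncomputable def dsolve (r s t a : ℕ → ℝ) : ℕ → ℝ
  | n => (r n * a n -
      ∑ k ∈ (Finset.range n).attach, s (n - k.1) * t k.1 * dsolve r s t a k.1) / (s 0 * t n)
  decreasing_by exact Finset.mem_range.mp k.2

lemma dsolve_eq (r s t a : ℕ → ℝ) (n : ℕ) :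
    dsolve r s t a n = (r n * a n -
      ∑ k ∈ Finset.range n, s (n - k) * t k * dsolve r s t a k) / (s 0 * t n) := by
  rw [dsolve]
  congr 1
  rw [← Finset.sum_attach (Finset.range n) (fun k => s (n - k) * t k * dsolve r s t a k)]

lemma del_sum (x : ℕ → ℝ) (n : ℕ) :
    ∑ k ∈ Finset.range (n + 1), del x k = x n := by
  induction n with
  | zero => simp [del]
  | succ n ih => rw [Finset.sum_range_succ, ih, del]; simp

lemma eq_dsolve_del (r s t : ℕ → ℝ) (hr : ∀ n, r n ≠ 0) (ht : ∀ n, t n ≠ 0) (hs0 : s 0 ≠ 0)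
    (x : ℕ → ℝ) (n : ℕ) : dsolve r s t (Amap r s t x) n = del x n := by
  induction n using Nat.strong_induction_on with
  | _ n ih =>
    rw [dsolve_eq]
    have h1 : r n * Amap r s t x n = ∑ k ∈ Finset.range (n + 1), s (n - k) * t k * del x k := by
      rw [Amap, ← mul_assoc, mul_one_div, div_self (hr n), one_mul]
    have h2 : ∑ k ∈ Finset.range n, s (n - k) * t k * dsolve r s t (Amap r s t x) k
        = ∑ k ∈ Finset.range n, s (n - k) * t k * del x k :=
      Finset.sum_congr rfl (fun k hk => by rw [ih k (Finset.mem_range.mp hk)])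
    rw [h1, h2, Finset.sum_range_succ, add_sub_cancel_left, Nat.sub_self]
    rw [mul_comm]
    exact mul_div_cancel_right₀ _ (mul_ne_zero hs0 (ht n))

lemma self_eq_sum_dsolve (r s t : ℕ → ℝ) (hr : ∀ n, r n ≠ 0) (ht : ∀ n, t n ≠ 0)
    (hs0 : s 0 ≠ 0) (x : ℕ → ℝ) (n : ℕ) :
    x n = ∑ k ∈ Finset.range (n + 1), dsolve r s t (Amap r s t x) k := by
  rw [Finset.sum_congr rfl (fun k _ => eq_dsolve_del r s t hr ht hs0 x k), del_sum]

lemma dsolve_eq_zero (r s t a : ℕ → ℝ) (ha : ∀ n, a n = 0) (n : ℕ) :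
    dsolve r s t a n = 0 := by
  induction n using Nat.strong_induction_on with
  | _ n ih =>
    rw [dsolve_eq, ha, Finset.sum_congr rfl (fun k hk => by
      rw [ih k (Finset.mem_range.mp hk)])]
    simp

lemma dsolve_tendsto (r s t : ℕ → ℝ) (a : ℕ → ℕ → ℝ) (b : ℕ → ℝ)
    (h : ∀ k, Tendsto (fun m => a m k) atTop (𝓝 (b k))) (n : ℕ) :
    Tendsto (fun m => dsolve r s t (a m) n) atTop (𝓝 (dsolve r s t b n)) := by
  induction n using Nat.strong_induction_on with
  | _ n ih =>
    simp only [dsolve_eq r s t _ n]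
    exact (((h n).const_mul _).sub
      (tendsto_finset_sum _ (fun k hk => ((ih k (Finset.mem_range.mp hk)).const_mul _)))).div_const _

lemma del_sub (x y : ℕ → ℝ) (k : ℕ) : del (x - y) k = del x k - del y k := by
  unfold del; by_cases h : k = 0 <;> simp [h] <;> ring

lemma del_add (x y : ℕ → ℝ) (k : ℕ) : del (x + y) k = del x k + del y k := by
  unfold del; by_cases h : k = 0 <;> simp [h] <;> ring

lemma del_smul (c : ℝ) (x : ℕ → ℝ) (k : ℕ) : del (c • x) k = c * del x k := by
  unfold del; by_cases h : k = 0 <;> simp [h] <;> ring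

lemma Amap_sub (r s t : ℕ → ℝ) (x y : ℕ → ℝ) (n : ℕ) :
    Amap r s t (x - y) n = Amap r s t x n - Amap r s t y n := by
  unfold Amap
  rw [← mul_sub, ← Finset.sum_sub_distrib]
  congr 1
  exact Finset.sum_congr rfl fun k _ => by rw [del_sub]; ring

lemma Amap_add (r s t : ℕ → ℝ) (x y : ℕ → ℝ) (n : ℕ) :
    Amap r s t (x + y) n = Amap r s t x n + Amap r s t y n := by
  unfold Amap
  rw [← mul_add, ← Finset.sum_add_distrib]
  congr 1
  exact Finset.sum_congr rfl fun k _ => by rw [del_add]; ring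

lemma Amap_smul (r s t : ℕ → ℝ) (c : ℝ) (x : ℕ → ℝ) (n : ℕ) :
    Amap r s t (c • x) n = c * Amap r s t x n := by
  unfold Amap
  rw [Finset.mul_sum, Finset.mul_sum, Finset.mul_sum]
  exact Finset.sum_congr rfl fun k _ => by rw [del_smul]; ring

lemma Amap_tendsto (r s t : ℕ → ℝ) (y : ℕ → ℕ → ℝ) (z : ℕ → ℝ)
    (h : ∀ k, Tendsto (fun m => y m k) atTop (𝓝 (z k))) (n : ℕ) :
    Tendsto (fun m => Amap r s t (y m) n) atTop (𝓝 (Amap r s t z n)) := by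
  unfold Amap
  refine Tendsto.const_mul _ (tendsto_finset_sum _ fun k _ => ?_)
  refine Tendsto.const_mul _ ?_
  unfold del
  by_cases hk : k = 0
  · simp only [hk, if_pos]
    simpa using (h 0)
  · simp only [if_neg hk]
    exact (h k).sub (h (k - 1))

lemma sigma_zero (r s t p : ℕ → ℝ) (hp1 : ∀ n, 1 ≤ p n) : sigmaP r s t p 0 = 0 := by
  unfold sigmaP
  have h : ∀ n, Amap r s t (0 : ℕ → ℝ) n = 0 := by
    intro n; unfold Amap del; simp
  simp only [h, abs_zero]
  have : ∀ n, (0 : ℝ) ^ p n = 0 := fun n =>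
    Real.zero_rpow (by linarith [hp1 n])
  simp [this]

lemma sigma_abs (r s t p : ℕ → ℝ) (c : ℝ) (x : ℕ → ℝ) :
    sigmaP r s t p (c • x) = sigmaP r s t p (|c| • x) := by
  unfold sigmaP
  refine tsum_congr fun n => ?_
  rw [Amap_smul, Amap_smul, abs_mul, abs_mul, abs_abs]

lemma sigma_smul_le_one (r s t p : ℕ → ℝ) (hp1 : ∀ n, 1 ≤ p n) (c : ℝ) (hc : |c| ≤ 1)
    (x : ℕ → ℝ) : sigmaP r s t p (c • x) ≤ ENNReal.ofReal |c| * sigmaP r s t p x := by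
  unfold sigmaP
  rw [← ENNReal.tsum_mul_left]
  refine ENNReal.tsum_le_tsum fun n => ?_
  rw [← ENNReal.ofReal_mul (abs_nonneg c)]
  refine ENNReal.ofReal_le_ofReal ?_
  rw [Amap_smul, abs_mul, Real.mul_rpow (abs_nonneg c) (abs_nonneg _)]
  have h1 : |c| ^ p n ≤ |c| := by
    calc |c| ^ p n ≤ |c| ^ (1 : ℝ) :=
          Real.rpow_le_rpow_of_exponent_ge' (abs_nonneg c) hc zero_le_one (hp1 n)
      _ = |c| := Real.rpow_one _
  exact mul_le_mul_of_nonneg_right h1 (Real.rpow_nonneg (abs_nonneg _) _)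

lemma sigma_smul_le_M (r s t p : ℕ → ℝ) (M : ℝ) (hpM : ∀ n, p n ≤ M) (c : ℝ) (hc : 1 ≤ |c|)
    (x : ℕ → ℝ) : sigmaP r s t p (c • x) ≤ ENNReal.ofReal (|c| ^ M) * sigmaP r s t p x := by
  unfold sigmaP
  rw [← ENNReal.tsum_mul_left]
  refine ENNReal.tsum_le_tsum fun n => ?_
  rw [← ENNReal.ofReal_mul (Real.rpow_nonneg (abs_nonneg c) _)]
  refine ENNReal.ofReal_le_ofReal ?_
  rw [Amap_smul, abs_mul, Real.mul_rpow (abs_nonneg c) (abs_nonneg _)]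
  exact mul_le_mul_of_nonneg_right (Real.rpow_le_rpow_of_exponent_le hc (hpM n))
    (Real.rpow_nonneg (abs_nonneg _) _)

lemma sigma_convex (r s t p : ℕ → ℝ) (hp1 : ∀ n, 1 ≤ p n) (a b : ℝ) (ha : 0 ≤ a) (hb : 0 ≤ b)
    (hab : a + b = 1) (x y : ℕ → ℝ) :
    sigmaP r s t p (a • x + b • y) ≤
      ENNReal.ofReal a * sigmaP r s t p x + ENNReal.ofReal b * sigmaP r s t p y := by
  unfold sigmaP
  rw [← ENNReal.tsum_mul_left, ← ENNReal.tsum_mul_left, ← ENNReal.tsum_add]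
  refine ENNReal.tsum_le_tsum fun n => ?_
  rw [← ENNReal.ofReal_mul ha, ← ENNReal.ofReal_mul hb,
    ← ENNReal.ofReal_add (mul_nonneg ha (Real.rpow_nonneg (abs_nonneg _) _))
      (mul_nonneg hb (Real.rpow_nonneg (abs_nonneg _) _))]
  refine ENNReal.ofReal_le_ofReal ?_
  rw [Amap_add, Amap_smul, Amap_smul]
  set U := |Amap r s t x n|
  set V := |Amap r s t y n|
  have hU : 0 ≤ U := abs_nonneg _
  have hV : 0 ≤ V := abs_nonneg _
  have h1 : |a * Amap r s t x n + b * Amap r s t y n| ≤ a * U + b * V := by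
    calc |a * Amap r s t x n + b * Amap r s t y n| ≤
        |a * Amap r s t x n| + |b * Amap r s t y n| := abs_add_le _ _
      _ = a * U + b * V := by rw [abs_mul, abs_mul, abs_of_nonneg ha, abs_of_nonneg hb]
  calc |a * Amap r s t x n + b * Amap r s t y n| ^ p n ≤ (a * U + b * V) ^ p n :=
        Real.rpow_le_rpow (abs_nonneg _) h1 (by linarith [hp1 n])
    _ ≤ a * U ^ p n + b * V ^ p n := by
        have := (convexOn_rpow (hp1 n)).2 (Set.mem_Ici.mpr hU) (Set.mem_Ici.mpr hV) ha hb hab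
        simpa [smul_eq_mul] using this

lemma sigma_sub_le (r s t p : ℕ → ℝ) (M : ℝ) (hp1 : ∀ n, 1 ≤ p n) (hpM : ∀ n, p n ≤ M) (x y : ℕ → ℝ) :
    sigmaP r s t p (x - y) ≤
      ENNReal.ofReal (2 ^ M) * (sigmaP r s t p x + sigmaP r s t p y) := by
  unfold sigmaP
  rw [← ENNReal.tsum_add, ← ENNReal.tsum_mul_left]
  refine ENNReal.tsum_le_tsum fun n => ?_
  rw [← ENNReal.ofReal_add (Real.rpow_nonneg (abs_nonneg _) _)
      (Real.rpow_nonneg (abs_nonneg _) _),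
    ← ENNReal.ofReal_mul (Real.rpow_nonneg (by norm_num) _)]
  refine ENNReal.ofReal_le_ofReal ?_
  rw [Amap_sub]
  set U := |Amap r s t x n|
  set V := |Amap r s t y n|
  have hU : 0 ≤ U := abs_nonneg _
  have hV : 0 ≤ V := abs_nonneg _
  have hm : 0 ≤ max U V := le_max_of_le_left hU
  have h1 : |Amap r s t x n - Amap r s t y n| ≤ 2 * max U V := by
    calc |Amap r s t x n - Amap r s t y n| ≤ U + V := abs_sub _ _
      _ ≤ 2 * max U V := by rcases max_cases U V with ⟨h, h2⟩ | ⟨h, h2⟩ <;> rw [h] <;> linarith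
  calc |Amap r s t x n - Amap r s t y n| ^ p n ≤ (2 * max U V) ^ p n :=
        Real.rpow_le_rpow (abs_nonneg _) h1 (by linarith [hp1 n])
    _ = 2 ^ p n * (max U V) ^ p n := Real.mul_rpow (by norm_num) hm
    _ ≤ 2 ^ M * (U ^ p n + V ^ p n) := by
        have h2 : (2:ℝ) ^ p n ≤ 2 ^ M := Real.rpow_le_rpow_of_exponent_le one_le_two (hpM n)
        have h3 : (max U V) ^ p n ≤ U ^ p n + V ^ p n := by
          rcases max_cases U V with ⟨h, _⟩ | ⟨h, _⟩ <;> rw [h]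
          · exact le_add_of_nonneg_right (Real.rpow_nonneg hV _)
          · exact le_add_of_nonneg_left (Real.rpow_nonneg hU _)
        exact mul_le_mul h2 h3 (Real.rpow_nonneg hm _) (Real.rpow_nonneg (by norm_num) _)

lemma sigma_fatou (r s t p : ℕ → ℝ) (hp1 : ∀ n, 1 ≤ p n) (C : ℝ≥0∞) (y : ℕ → ℕ → ℝ)
    (z : ℕ → ℝ) (hpt : ∀ k, Tendsto (fun l => y l k) atTop (𝓝 (z k)))
    (hb : ∀ᶠ l in atTop, sigmaP r s t p (y l) ≤ C) :
    sigmaP r s t p z ≤ C := by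
  rw [sigmaP, ENNReal.tsum_eq_iSup_sum]
  refine iSup_le fun F => ?_
  have hT : Tendsto (fun l => ∑ n ∈ F, ENNReal.ofReal (|Amap r s t (y l) n| ^ p n)) atTop
      (𝓝 (∑ n ∈ F, ENNReal.ofReal (|Amap r s t z n| ^ p n))) := by
    refine tendsto_finset_sum _ fun n _ => ?_
    exact ENNReal.tendsto_ofReal
      (((Amap_tendsto r s t y z hpt n).abs).rpow_const (Or.inr (by linarith [hp1 n])))
  refine le_of_tendsto hT (hb.mono fun l hl => ?_)
  exact le_trans (ENNReal.sum_le_tsum F) hl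

open scoped Pointwise

def Sset (r s t p : ℕ → ℝ) (x : ℕ → ℝ) : Set ℝ :=
  {c : ℝ | 0 < c ∧ sigmaP r s t p (c⁻¹ • x) ≤ 1}

lemma lux_eq (r s t p : ℕ → ℝ) (x : ℕ → ℝ) : lux r s t p x = sInf (Sset r s t p x) := rfl

lemma Sset_bddBelow (r s t p : ℕ → ℝ) (x : ℕ → ℝ) : BddBelow (Sset r s t p x) :=
  ⟨0, fun c hc => hc.1.le⟩

lemma lux_nonneg (r s t p : ℕ → ℝ) (x : ℕ → ℝ) : 0 ≤ lux r s t p x :=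
  Real.sInf_nonneg fun c hc => hc.1.le

lemma lux_le_of_mem (r s t p : ℕ → ℝ) {x : ℕ → ℝ} {c : ℝ} (hc : c ∈ Sset r s t p x) :
    lux r s t p x ≤ c := csInf_le (Sset_bddBelow r s t p x) hc

lemma Sset_nonempty (r s t p : ℕ → ℝ) (hp1 : ∀ n, 1 ≤ p n) {x : ℕ → ℝ}
    (hx : sigmaP r s t p x < ⊤) : (Sset r s t p x).Nonempty := by
  set c : ℝ := max 1 ((sigmaP r s t p x).toReal + 1) with hc
  have hc1 : (1:ℝ) ≤ c := le_max_left _ _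
  have hc0 : 0 < c := lt_of_lt_of_le one_pos hc1
  refine ⟨c, hc0, ?_⟩
  have h1 : sigmaP r s t p (c⁻¹ • x) ≤ ENNReal.ofReal |c⁻¹| * sigmaP r s t p x :=
    sigma_smul_le_one r s t p hp1 _ (by
      rw [abs_of_pos (inv_pos.mpr hc0)]; exact inv_le_one_of_one_le₀ hc1) x
  refine le_trans h1 ?_
  have h2 : sigmaP r s t p x ≤ ENNReal.ofReal c := by
    rw [← ENNReal.ofReal_toReal hx.ne]
    exact ENNReal.ofReal_le_ofReal (le_trans (by linarith) (le_max_right _ _))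
  calc ENNReal.ofReal |c⁻¹| * sigmaP r s t p x ≤ ENNReal.ofReal c⁻¹ * ENNReal.ofReal c := by
        rw [abs_of_pos (inv_pos.mpr hc0)]
        exact mul_le_mul_right h2 _
    _ = ENNReal.ofReal (c⁻¹ * c) := (ENNReal.ofReal_mul (inv_pos.mpr hc0).le).symm
    _ = 1 := by rw [inv_mul_cancel₀ hc0.ne', ENNReal.ofReal_one]

lemma Sset_mono (r s t p : ℕ → ℝ) (hp1 : ∀ n, 1 ≤ p n) {x : ℕ → ℝ} {c d : ℝ}
    (hc : c ∈ Sset r s t p x) (hcd : c ≤ d) : d ∈ Sset r s t p x := by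
  obtain ⟨hc0, hcs⟩ := hc
  have hd0 : 0 < d := lt_of_lt_of_le hc0 hcd
  refine ⟨hd0, ?_⟩
  have key : (d⁻¹ : ℝ) • x = (c / d) • (c⁻¹ • x) := by
    rw [smul_smul, div_mul_eq_mul_div, mul_comm c c⁻¹, inv_mul_cancel₀ hc0.ne', one_div]
  rw [key]
  calc sigmaP r s t p ((c / d) • (c⁻¹ • x)) ≤
        ENNReal.ofReal |c / d| * sigmaP r s t p (c⁻¹ • x) :=
        sigma_smul_le_one r s t p hp1 _ (by
          rw [abs_of_pos (div_pos hc0 hd0)]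
          exact div_le_one_of_le₀ hcd hd0.le) _
    _ ≤ ENNReal.ofReal 1 * 1 := by
        refine mul_le_mul' (ENNReal.ofReal_le_ofReal ?_) hcs
        rw [abs_of_pos (div_pos hc0 hd0)]
        exact div_le_one_of_le₀ hcd hd0.le
    _ = 1 := by rw [ENNReal.ofReal_one, one_mul]

lemma mem_of_lux_lt (r s t p : ℕ → ℝ) (hp1 : ∀ n, 1 ≤ p n) {x : ℕ → ℝ} {ε : ℝ}
    (hx : sigmaP r s t p x < ⊤) (h : lux r s t p x < ε) : ε ∈ Sset r s t p x := by
  obtain ⟨c, hc, hcε⟩ := exists_lt_of_csInf_lt (Sset_nonempty r s t p hp1 hx) h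
  exact Sset_mono r s t p hp1 hc hcε.le

lemma abs_le_one_of_rpow {u pn : ℝ} (hu : 0 ≤ u) (hpn : 0 < pn) (h : u ^ pn ≤ 1) : u ≤ 1 := by
  by_contra hc
  push_neg at hc
  have := (Real.one_lt_rpow_iff_of_pos (lt_trans one_pos hc)).mpr (Or.inl ⟨hc, hpn⟩)
  linarith

lemma abs_Amap_le_of_sigma_le (r s t p : ℕ → ℝ) (hp1 : ∀ n, 1 ≤ p n) {z : ℕ → ℝ}
    (h : sigmaP r s t p z ≤ 1) (n : ℕ) : |Amap r s t z n| ≤ 1 := by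
  have h1 : ENNReal.ofReal (|Amap r s t z n| ^ p n) ≤ 1 :=
    le_trans (ENNReal.le_tsum n) h
  rw [ENNReal.ofReal_le_one] at h1
  exact abs_le_one_of_rpow (abs_nonneg _) (by linarith [hp1 n]) h1

lemma abs_Amap_le_of_lux_lt (r s t p : ℕ → ℝ) (hp1 : ∀ n, 1 ≤ p n) {x : ℕ → ℝ} {ε : ℝ}
    (hx : sigmaP r s t p x < ⊤) (h : lux r s t p x < ε) (n : ℕ) : |Amap r s t x n| ≤ ε := by
  obtain ⟨hε, hσ⟩ := mem_of_lux_lt r s t p hp1 hx h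
  have h1 : |Amap r s t (ε⁻¹ • x) n| ≤ 1 := abs_Amap_le_of_sigma_le r s t p hp1 hσ n
  rw [Amap_smul, abs_mul, abs_of_pos (inv_pos.mpr hε)] at h1
  calc |Amap r s t x n| = ε * (ε⁻¹ * |Amap r s t x n|) := by
        rw [← mul_assoc, mul_inv_cancel₀ hε.ne', one_mul]
    _ ≤ ε * 1 := mul_le_mul_of_nonneg_left h1 hε.le
    _ = ε := mul_one ε


theorem lrstp_BK_space
    (r s t p : ℕ → ℝ) (hr : ∀ n, r n ≠ 0) (ht : ∀ n, t n ≠ 0) (hs0 : s 0 ≠ 0)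
    (M : ℝ) (hp : ∀ n, 1 < p n) (hpM : ∀ n, p n ≤ M) :
    -- the Luxemburg norm is a norm on `l(r,s,t,p;Δ)`
    (∀ x ∈ lrstp r s t p, lux r s t p x = 0 ↔ x = 0) ∧
    (∀ (c : ℝ), ∀ x ∈ lrstp r s t p, lux r s t p (c • x) = |c| * lux r s t p x) ∧
    (∀ x ∈ lrstp r s t p, ∀ y ∈ lrstp r s t p,
      lux r s t p (x + y) ≤ lux r s t p x + lux r s t p y) ∧
    -- completeness: every Cauchy sequence in the space converges in the space
    (∀ xs : ℕ → ℕ → ℝ, (∀ m, xs m ∈ lrstp r s t p) →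
      (∀ ε : ℝ, 0 < ε → ∃ N, ∀ m l, N ≤ m → N ≤ l →
        lux r s t p (xs m - xs l) < ε) →
      ∃ x ∈ lrstp r s t p,
        Tendsto (fun m => lux r s t p (xs m - x)) atTop (𝓝 0)) ∧
    -- each coordinate functional is continuous
    (∀ (xs : ℕ → ℕ → ℝ) (x : ℕ → ℝ), (∀ m, xs m ∈ lrstp r s t p) →
      x ∈ lrstp r s t p →
      Tendsto (fun m => lux r s t p (xs m - x)) atTop (𝓝 0) →
      ∀ k, Tendsto (fun m => xs m k) atTop (𝓝 (x k))) := by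
  have hp1 : ∀ n, 1 ≤ p n := fun n => (hp n).le
  have lux_zero : lux r s t p (0 : ℕ → ℝ) = 0 := by
    have hS : Sset r s t p 0 = Set.Ioi 0 := by
      ext c
      simp [Sset, smul_zero, sigma_zero r s t p hp1, Set.mem_Ioi]
    rw [lux_eq, hS, csInf_Ioi]
  have hsub : ∀ u v : ℕ → ℝ, sigmaP r s t p u < ⊤ → sigmaP r s t p v < ⊤ →
      sigmaP r s t p (u - v) < ⊤ := by
    intro u v hu hv
    refine lt_of_le_of_lt (sigma_sub_le r s t p M hp1 hpM u v) ?_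
    exact ENNReal.mul_lt_top ENNReal.ofReal_lt_top (ENNReal.add_lt_top.mpr ⟨hu, hv⟩)
  refine ⟨?_, ?_, ?_, ?_, ?_⟩
  · -- (i)
    intro x hx
    constructor
    · intro h
      have key : ∀ n, Amap r s t x n = 0 := by
        intro n
        rw [← abs_eq_zero]
        by_contra hne
        have hpos : 0 < |Amap r s t x n| := lt_of_le_of_ne (abs_nonneg _) (Ne.symm hne)
        have := abs_Amap_le_of_lux_lt r s t p hp1 hx
          (show lux r s t p x < |Amap r s t x n| / 2 by rw [h]; linarith) n
        linarith
      funext n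
      rw [show (0 : ℕ → ℝ) n = 0 from rfl, self_eq_sum_dsolve r s t hr ht hs0 x n]
      exact Finset.sum_eq_zero fun k _ => dsolve_eq_zero r s t _ key k
    · intro h
      rw [h, lux_zero]
  · -- (ii)
    intro c x hx
    by_cases hc : c = 0
    · rw [hc, zero_smul, lux_zero, abs_zero, zero_mul]
    · have hcabs : 0 < |c| := abs_pos.mpr hc
      have hkey : ∀ d : ℝ, sigmaP r s t p (d⁻¹ • (c • x)) =
          sigmaP r s t p ((|c|⁻¹ * d)⁻¹ • x) := by
        intro d
        rw [smul_smul, mul_inv, inv_inv, sigma_abs r s t p (d⁻¹ * c),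
          sigma_abs r s t p (|c| * d⁻¹), abs_mul, abs_mul, abs_abs, mul_comm]
      have hSeq : Sset r s t p (c • x) = |c| • Sset r s t p x := by
        ext d
        rw [Set.mem_smul_set_iff_inv_smul_mem₀ hcabs.ne', smul_eq_mul]
        constructor
        · rintro ⟨hd, hσ⟩
          exact ⟨mul_pos (inv_pos.mpr hcabs) hd, by rwa [hkey d] at hσ⟩
        · rintro ⟨hd, hσ⟩
          have hd0 : 0 < d := by
            by_contra hd0
            push_neg at hd0
            have : |c|⁻¹ * d ≤ 0 := mul_nonpos_of_nonneg_of_nonpos (inv_pos.mpr hcabs).le hd0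
            linarith
          exact ⟨hd0, by rwa [hkey d]⟩
      rw [lux_eq, hSeq, Real.sInf_smul_of_nonneg (abs_nonneg c), smul_eq_mul, lux_eq]
  · -- (iii)
    intro x hx y hy
    have hSx := Sset_nonempty r s t p hp1 hx
    have hSy := Sset_nonempty r s t p hp1 hy
    have key : ∀ a ∈ Sset r s t p x, ∀ b ∈ Sset r s t p y,
        lux r s t p (x + y) ≤ a + b := by
      rintro a ⟨ha0, haσ⟩ b ⟨hb0, hbσ⟩
      have hab : 0 < a + b := by linarith
      refine lux_le_of_mem r s t p ⟨hab, ?_⟩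
      have hid : (a + b)⁻¹ • (x + y) =
          (a / (a + b)) • (a⁻¹ • x) + (b / (a + b)) • (b⁻¹ • y) := by
        funext k
        simp only [Pi.add_apply, Pi.smul_apply, smul_eq_mul]
        field_simp
      rw [hid]
      have hsum : a / (a + b) + b / (a + b) = 1 := by
        rw [← add_div, div_self hab.ne']
      calc sigmaP r s t p ((a / (a + b)) • (a⁻¹ • x) + (b / (a + b)) • (b⁻¹ • y)) ≤
            ENNReal.ofReal (a / (a + b)) * sigmaP r s t p (a⁻¹ • x) +
              ENNReal.ofReal (b / (a + b)) * sigmaP r s t p (b⁻¹ • y) :=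
            sigma_convex r s t p hp1 _ _ (div_nonneg ha0.le hab.le)
              (div_nonneg hb0.le hab.le) hsum _ _
        _ ≤ ENNReal.ofReal (a / (a + b)) * 1 + ENNReal.ofReal (b / (a + b)) * 1 :=
            add_le_add (mul_le_mul_right haσ _) (mul_le_mul_right hbσ _)
        _ = 1 := by
            rw [mul_one, mul_one, ← ENNReal.ofReal_add (div_nonneg ha0.le hab.le)
              (div_nonneg hb0.le hab.le), hsum, ENNReal.ofReal_one]
    have h1 : ∀ a ∈ Sset r s t p x, lux r s t p (x + y) - a ≤ lux r s t p y := by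
      intro a ha
      rw [lux_eq r s t p y]
      exact le_csInf hSy fun b hb => by linarith [key a ha b hb]
    have h2 : lux r s t p (x + y) - lux r s t p y ≤ lux r s t p x := by
      rw [lux_eq r s t p x]
      exact le_csInf hSx fun a ha => by linarith [h1 a ha]
    linarith
  · -- (iv) completeness
    intro xs hxs hcauchy
    have hzfin : ∀ m l, sigmaP r s t p (xs m - xs l) < ⊤ := fun m l =>
      hsub _ _ (hxs m) (hxs l)
    have hAcauchy : ∀ n, ∃ L, Tendsto (fun m => Amap r s t (xs m) n) atTop (𝓝 L) := by
      intro n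
      refine cauchySeq_tendsto_of_complete ?_
      rw [Metric.cauchySeq_iff]
      intro ε hε
      obtain ⟨N, hN⟩ := hcauchy (ε / 2) (by linarith)
      refine ⟨N, fun m hm l hl => ?_⟩
      have h1 := abs_Amap_le_of_lux_lt r s t p hp1 (hzfin m l) (hN m l hm hl) n
      rw [Amap_sub] at h1
      rw [Real.dist_eq]
      linarith
    choose a ha using hAcauchy
    set x : ℕ → ℝ := fun k => ∑ j ∈ Finset.range (k + 1), dsolve r s t a j with hxdef
    have hpt : ∀ k, Tendsto (fun m => xs m k) atTop (𝓝 (x k)) := by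
      intro k
      have h2 : Tendsto (fun m => ∑ j ∈ Finset.range (k + 1),
          dsolve r s t (Amap r s t (xs m)) j) atTop (𝓝 (x k)) :=
        tendsto_finset_sum _ fun j _ =>
          dsolve_tendsto r s t (fun m => Amap r s t (xs m)) a ha j
      convert h2 using 2 with m
      exact self_eq_sum_dsolve r s t hr ht hs0 (xs m) k
    have hmem : ∀ {ε : ℝ}, 0 < ε → ∀ N, (∀ m l, N ≤ m → N ≤ l →
        lux r s t p (xs m - xs l) < ε) →
        ∀ m, N ≤ m → sigmaP r s t p (ε⁻¹ • (xs m - x)) ≤ 1 := by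
      intro ε hε N hN m hm
      refine sigma_fatou r s t p hp1 1 (fun l => ε⁻¹ • (xs m - xs l)) _ ?_ ?_
      · intro k
        simp only [Pi.smul_apply, Pi.sub_apply, smul_eq_mul]
        exact (tendsto_const_nhds.sub (hpt k)).const_mul _
      · filter_upwards [eventually_ge_atTop N] with l hl
        exact (mem_of_lux_lt r s t p hp1 (hzfin m l) (hN m l hm hl)).2
    obtain ⟨N₁, hN₁⟩ := hcauchy 1 one_pos
    have hx1 : sigmaP r s t p (xs N₁ - x) ≤ 1 := by
      have := hmem one_pos N₁ hN₁ N₁ le_rfl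
      rwa [inv_one, one_smul] at this
    have hxmem : x ∈ lrstp r s t p := by
      have hxeq : x = xs N₁ - (xs N₁ - x) := (_root_.sub_sub_cancel (xs N₁) x).symm
      rw [lrstp, Set.mem_setOf_eq, hxeq]
      exact hsub _ _ (hxs N₁) (lt_of_le_of_lt hx1 (by norm_num))
    refine ⟨x, hxmem, ?_⟩
    rw [Metric.tendsto_atTop]
    intro ε hε
    obtain ⟨N, hN⟩ := hcauchy (ε / 2) (by linarith)
    refine ⟨N, fun m hm => ?_⟩
    have h3 : lux r s t p (xs m - x) ≤ ε / 2 :=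
      lux_le_of_mem r s t p ⟨by linarith, hmem (by linarith) N hN m hm⟩
    rw [Real.dist_eq, sub_zero, abs_of_nonneg (lux_nonneg r s t p _)]
    linarith
  · -- (v) coordinates
    intro xs x hxs hx hlux k
    have hz : ∀ m, sigmaP r s t p (xs m - x) < ⊤ := fun m => hsub _ _ (hxs m) hx
    have hA : ∀ n, Tendsto (fun m => Amap r s t (xs m - x) n) atTop (𝓝 0) := by
      intro n
      rw [Metric.tendsto_atTop]
      intro ε hε
      have hev := hlux.eventually (gt_mem_nhds (show (0:ℝ) < ε / 2 by linarith))
      rw [eventually_atTop] at hev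
      obtain ⟨N, hN⟩ := hev
      refine ⟨N, fun m hm => ?_⟩
      have := abs_Amap_le_of_lux_lt r s t p hp1 (hz m) (hN m hm) n
      rw [Real.dist_eq, sub_zero]
      linarith
    have hd : ∀ j, Tendsto (fun m => dsolve r s t (Amap r s t (xs m - x)) j) atTop (𝓝 0) := by
      intro j
      have h0 : dsolve r s t (fun _ => (0:ℝ)) j = 0 := dsolve_eq_zero r s t _ (fun _ => rfl) j
      have := dsolve_tendsto r s t (fun m => Amap r s t (xs m - x)) (fun _ => (0:ℝ)) hA j
      rwa [h0] at this
    have hzk : Tendsto (fun m => (xs m - x) k) atTop (𝓝 0) := by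
      have h2 : Tendsto (fun m => ∑ j ∈ Finset.range (k + 1),
          dsolve r s t (Amap r s t (xs m - x)) j) atTop (𝓝 0) := by
        have := tendsto_finset_sum (Finset.range (k + 1)) fun j (_ : j ∈ Finset.range (k+1)) => hd j
        simpa using this
      convert h2 using 2 with m
      exact self_eq_sum_dsolve r s t hr ht hs0 (xs m - x) k
    have h4 : Tendsto (fun m => (xs m - x) k + x k) atTop (𝓝 (0 + x k)) :=
      hzk.add tendsto_const_nhds
    simp only [Pi.sub_apply, sub_add_cancel, zero_add] at h4
    exact h4
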